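/- arXiv:2106.00402 — 6 statements merged into one kernel-verified Lean document; each statement's English description precedes it below -/
import Mathlib

section
/- Let n ≥ 1 be an integer and μ > 0. Let X_1, …, X_n be real-valued random variables on a common probability space (no independence is assumed) such that each X_i is exponentially distributed with rate μ. Then the expected value of the maximum satisfies E[max_{1 ≤ i ≤ n} X_i] ≤ (1/μ)(1 + log n). -/
open MeasureTheory ProbabilityTheory Real Set Filter Topology
open scoped ENNReal NNReal

lemma exponentialPDFReal_eq' (r x : ℝ) :
    exponentialPDFReal r x = if 0 ≤ x then r * Real.exp (-(r * x)) else 0 := by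
  rw [exponentialPDFReal, gammaPDFReal]
  simp only [rpow_one, Real.Gamma_one, div_one, sub_self, rpow_zero, mul_one]

lemma integrableOn_aux {μ a : ℝ} (hμ : 0 < μ) (ha : 0 ≤ a) :
    IntegrableOn (fun x => μ * ((x - a) * Real.exp (-(μ * x)))) (Set.Ioi a) := by
  have h0 : IntegrableOn (fun x : ℝ => x * Real.exp (-(μ * x))) (Set.Ioi 0) := by
    have := integrableOn_rpow_mul_exp_neg_mul_rpow (s := 1) (p := 1) (b := μ)
      (by norm_num) one_pos hμ
    refine this.congr_fun (fun x hx => ?_) measurableSet_Ioi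
    simp
  have h1 : IntegrableOn (fun x : ℝ => x * Real.exp (-(μ * x))) (Set.Ioi a) :=
    h0.mono_set (Set.Ioi_subset_Ioi ha)
  have h2 : IntegrableOn (fun x : ℝ => (x - a) * Real.exp (-(μ * x))) (Set.Ioi a) := by
    refine Integrable.mono h1 ?_ ?_
    · exact (Continuous.aestronglyMeasurable (by continuity)).restrict
    · filter_upwards [ae_restrict_mem measurableSet_Ioi] with x hx
      have hx' : a < x := hx
      have hx0 : (0:ℝ) < x := lt_of_le_of_lt ha hx'
      rw [Real.norm_eq_abs, Real.norm_eq_abs, abs_mul, abs_mul,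
        abs_of_nonneg (by linarith : (0:ℝ) ≤ x - a), abs_of_nonneg hx0.le,
        abs_of_pos (Real.exp_pos _)]
      exact mul_le_mul_of_nonneg_right (by linarith) (Real.exp_pos _).le
  exact h2.const_mul μ

lemma integral_aux {μ a : ℝ} (hμ : 0 < μ) (ha : 0 ≤ a) :
    ∫ x in Set.Ioi a, μ * ((x - a) * Real.exp (-(μ * x))) = Real.exp (-(μ * a)) / μ := by
  have hderiv : ∀ x ∈ Set.Ici a,
      HasDerivAt (fun x => -(x - a + 1 / μ) * Real.exp (-(μ * x)))
        (μ * ((x - a) * Real.exp (-(μ * x)))) x := by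
    intro x _
    have h1 : HasDerivAt (fun x : ℝ => -(x - a + 1 / μ)) (-1) x := by
      have := (((hasDerivAt_id x).sub_const a).add_const (1 / μ)).neg
      exact this
    have h2 : HasDerivAt (fun x : ℝ => Real.exp (-(μ * x))) (-μ * Real.exp (-(μ * x))) x := by
      have := (((hasDerivAt_id x).const_mul μ).neg).exp
      simpa [mul_comm] using this
    have h3 : HasDerivAt (fun x => -(x - a + 1 / μ) * Real.exp (-(μ * x))) _ x := h1.mul h2
    convert h3 using 1
    field_simp
    ring
  have he : Tendsto (fun x : ℝ => Real.exp (-(μ * x))) atTop (𝓝 0) := by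
    apply Real.tendsto_exp_atBot.comp
    exact tendsto_neg_atBot_iff.mpr (tendsto_id.const_mul_atTop hμ)
  have hx' : Tendsto (fun x : ℝ => x * Real.exp (-(μ * x))) atTop (𝓝 0) := by
    have hx : Tendsto (fun x : ℝ => x ^ (1:ℝ) * Real.exp (-μ * x)) atTop (𝓝 0) :=
      tendsto_rpow_mul_exp_neg_mul_atTop_nhds_zero 1 μ hμ
    refine hx.congr' ?_
    filter_upwards [eventually_ge_atTop (0:ℝ)] with x hx0
    rw [Real.rpow_one, neg_mul]
  have htend : Tendsto (fun x => -(x - a + 1 / μ) * Real.exp (-(μ * x))) atTop (𝓝 0) := by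
    have key := hx'.neg.add (he.const_mul (a - 1 / μ))
    simp only [neg_zero, mul_zero, zero_add, add_zero] at key
    exact key.congr (fun x => by ring)
  have := integral_Ioi_of_hasDerivAt_of_tendsto' hderiv (integrableOn_aux hμ ha) htend
  rw [this]
  simp only [sub_self, zero_sub]
  field_simp
  ring

/-- Integral of `max (x - a) 0` against the exponential measure. -/
lemma integral_expMeasure_aux {μ a : ℝ} (hμ : 0 < μ) (ha : 0 ≤ a) :
    Integrable (fun x => max (x - a) 0) (expMeasure μ) ∧
    ∫ x, max (x - a) 0 ∂(expMeasure μ) = Real.exp (-(μ * a)) / μ := by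
  have hmeas : Measurable fun x => (exponentialPDFReal μ x).toNNReal :=
    (measurable_exponentialPDFReal μ).real_toNNReal
  have hμeq : expMeasure μ =
      volume.withDensity (fun x => ((exponentialPDFReal μ x).toNNReal : ℝ≥0∞)) := rfl
  have hfun : ∀ x : ℝ, ((exponentialPDFReal μ x).toNNReal : ℝ) * max (x - a) 0
      = Set.indicator (Set.Ioi a) (fun x => μ * ((x - a) * Real.exp (-(μ * x)))) x := by
    intro x
    rw [Real.coe_toNNReal _ (exponentialPDFReal_nonneg hμ x)]
    by_cases hx : a < x
    · have hxm : x ∈ Set.Ioi a := hx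
      rw [Set.indicator_of_mem hxm]
      have hx0 : (0:ℝ) ≤ x := le_trans ha hx.le
      rw [exponentialPDFReal_eq', if_pos hx0, max_eq_left (by linarith)]
      ring
    · have hxm : x ∉ Set.Ioi a := hx
      rw [Set.indicator_of_notMem hxm, max_eq_right (by push_neg at hx; linarith), mul_zero]
  constructor
  · rw [hμeq, integrable_withDensity_iff_integrable_coe_smul hmeas]
    refine (integrable_indicator_iff measurableSet_Ioi).2 (integrableOn_aux hμ ha) |>.congr ?_
    refine ae_of_all _ fun x => ?_
    simp only [smul_eq_mul]
    exact (hfun x).symm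
  · rw [hμeq, integral_withDensity_eq_integral_smul hmeas]
    simp only [NNReal.smul_def, smul_eq_mul]
    calc ∫ x, ((exponentialPDFReal μ x).toNNReal : ℝ) * max (x - a) 0
        = ∫ x, Set.indicator (Set.Ioi a) (fun x => μ * ((x - a) * Real.exp (-(μ * x)))) x := by
          exact integral_congr_ae (ae_of_all _ hfun)
      _ = ∫ x in Set.Ioi a, μ * ((x - a) * Real.exp (-(μ * x))) :=
          integral_indicator measurableSet_Ioi
      _ = Real.exp (-(μ * a)) / μ := integral_aux hμ ha

/-- If `X 1, …, X n` are (possibly dependent) real random variables on a common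
probability space, each exponentially distributed with rate `μ > 0`, then
`E[max_i X i] ≤ (1/μ)(1 + log n)`. -/
theorem expected_max_of_exponentials_le
    {Ω : Type*} [MeasureSpace Ω] [IsProbabilityMeasure (ℙ : Measure Ω)]
    (n : ℕ) (hn : 1 ≤ n) (μ : ℝ) (hμ : 0 < μ)
    (X : Fin n → Ω → ℝ) (hX : ∀ i, Measurable (X i))
    (hdist : ∀ i, Measure.map (X i) ℙ = expMeasure μ) :
    ∫ ω, (⨆ i, X i ω) ∂ℙ ≤ (1 / μ) * (1 + Real.log n) := by
  have hn0 : (0:ℝ) < n := by exact_mod_cast hn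
  have hlog : 0 ≤ Real.log n := Real.log_nonneg (by exact_mod_cast hn)
  set a : ℝ := Real.log n / μ with ha_def
  have ha : 0 ≤ a := div_nonneg hlog hμ.le
  set g : Fin n → Ω → ℝ := fun i ω => max (X i ω - a) 0 with hg_def
  have hg_nonneg : ∀ i ω, 0 ≤ g i ω := fun i ω => le_max_right _ _
  have hexp : Real.exp (-(μ * a)) = (n:ℝ)⁻¹ := by
    rw [ha_def, mul_div_cancel₀ _ hμ.ne', Real.exp_neg, Real.exp_log hn0]
  -- integrability and integral of each g i
  have hgmeas : ∀ i, AEStronglyMeasurable (fun x : ℝ => max (x - a) 0) (Measure.map (X i) ℙ) :=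
    fun i => (Continuous.aestronglyMeasurable (by continuity))
  have hgint : ∀ i, Integrable (g i) ℙ := by
    intro i
    have := (integrable_map_measure (hgmeas i) (hX i).aemeasurable).1
      (by rw [hdist i]; exact (integral_expMeasure_aux hμ ha).1)
    exact this
  have hgval : ∀ i, ∫ ω, g i ω ∂ℙ = (n:ℝ)⁻¹ / μ := by
    intro i
    have : ∫ ω, g i ω ∂ℙ = ∫ x, max (x - a) 0 ∂(Measure.map (X i) ℙ) :=
      (integral_map (hX i).aemeasurable (hgmeas i)).symm
    rw [this, hdist i, (integral_expMeasure_aux hμ ha).2, hexp]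
  -- a.e. nonnegativity of the X i
  have hXnonneg : ∀ i, ∀ᵐ ω ∂ℙ, 0 ≤ X i ω := by
    intro i
    have h0 : (Measure.map (X i) ℙ) (Set.Iio 0) = 0 := by
      rw [hdist i, expMeasure, gammaMeasure, withDensity_apply _ measurableSet_Iio]
      exact lintegral_gammaPDF_of_nonpos le_rfl
    have := (Measure.map_apply (hX i) measurableSet_Iio).symm.trans h0
    rw [ae_iff]
    simp only [not_le]
    exact this
  -- pointwise bound
  have hbound : ∀ ω, (⨆ i, X i ω) ≤ a + ∑ i, g i ω := by
    intro ω
    have : Nonempty (Fin n) := ⟨⟨0, hn⟩⟩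
    refine ciSup_le fun i => ?_
    have h1 : X i ω - a ≤ g i ω := le_max_left _ _
    have h2 : g i ω ≤ ∑ j, g j ω :=
      Finset.single_le_sum (fun j _ => hg_nonneg j ω) (Finset.mem_univ i)
    linarith
  -- integrability of the bound
  have hBint : Integrable (fun ω => a + ∑ i, g i ω) ℙ :=
    (integrable_const a).add (integrable_finset_sum _ fun i _ => hgint i)
  -- integrability of the sup
  have hMmeas : Measurable fun ω => ⨆ i, X i ω := by
    have : Nonempty (Fin n) := ⟨⟨0, hn⟩⟩
    exact Measurable.iSup hX
  have hMint : Integrable (fun ω => ⨆ i, X i ω) ℙ := by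
    refine hBint.mono hMmeas.aestronglyMeasurable ?_
    filter_upwards [hXnonneg ⟨0, hn⟩] with ω h0
    have hM0 : 0 ≤ ⨆ i, X i ω := by
      exact le_trans h0 (le_ciSup (f := fun i => X i ω)
        ((Set.finite_range _).bddAbove) (⟨0, hn⟩ : Fin n))
    rw [Real.norm_eq_abs, Real.norm_eq_abs, abs_of_nonneg hM0]
    have hsum : 0 ≤ ∑ i, g i ω := Finset.sum_nonneg fun i _ => hg_nonneg i ω
    rw [abs_of_nonneg (by linarith)]
    exact hbound ω
  -- conclude
  calc ∫ ω, (⨆ i, X i ω) ∂ℙ ≤ ∫ ω, (a + ∑ i, g i ω) ∂ℙ :=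
        integral_mono hMint hBint (fun ω => hbound ω)
    _ = a + ∑ i, ∫ ω, g i ω ∂ℙ := by
        rw [integral_add (integrable_const a) (integrable_finset_sum _ fun i _ => hgint i),
          integral_const, integral_finset_sum _ fun i _ => hgint i]
        simp
    _ = a + n * ((n:ℝ)⁻¹ / μ) := by
        simp [hgval, Finset.sum_const, Finset.card_univ, mul_comm]
    _ = (1 / μ) * (1 + Real.log n) := by
        rw [ha_def]
        field_simp
        ring
end

section
/- Let k ≥ 1 and 0 ≤ d ≤ k − 1 be integers, and let c_0, c_1, …, c_d be independent random variables each distributed uniformly on the k-element set Fin k. Then P(∃ j ∈ {1, …, d}, c_j = c_0) = 1 − (1 − 1/k)^d, and this probability is at most 1 − 1/e. -/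
open MeasureTheory ProbabilityTheory
open scoped ENNReal

/-- Real inequality: `exp (-1) ≤ (1 - 1/k)^d` when `d ≤ k - 1`. -/
lemma aux_exp_le (k d : ℕ) (hk : 1 ≤ k) (hd : d ≤ k - 1) :
    Real.exp (-1) ≤ ((1 : ℝ) - 1 / k) ^ d := by
  rcases Nat.lt_or_ge k 2 with h2 | h2
  · interval_cases k
    · interval_cases d
      simpa using Real.exp_le_one_iff.2 (by norm_num)
  · set m : ℕ := k - 1 with hm
    have hm1 : 1 ≤ m := by omega
    have hkm : (k : ℝ) = (m : ℝ) + 1 := by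
      have : k = m + 1 := by omega
      simp [this]
    have hmpos : (0 : ℝ) < m := by exact_mod_cast hm1
    have hk1 : (1 : ℝ) ≤ k := by exact_mod_cast hk
    have hbase : (0 : ℝ) ≤ 1 - 1 / k := by
      have : (1 : ℝ) / k ≤ 1 := by
        rw [div_le_one (by linarith)]; exact hk1
      linarith
    have hbase1 : (1 : ℝ) - 1 / k ≤ 1 := by
      have : (0:ℝ) ≤ 1 / k := by positivity
      linarith
    have step1 : ((1 : ℝ) - 1 / k) ^ m ≤ ((1 : ℝ) - 1 / k) ^ d :=
      pow_le_pow_of_le_one hbase hbase1 hd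
    have hexp : Real.exp (-(1 / (m : ℝ))) ≤ 1 - 1 / k := by
      have h1 : (1 : ℝ) / m + 1 ≤ Real.exp (1 / m) := Real.add_one_le_exp _
      have h2 : (0 : ℝ) < 1 / m + 1 := by positivity
      have h3 : Real.exp (-(1 / (m : ℝ))) = (Real.exp (1 / m))⁻¹ := by
        rw [Real.exp_neg]
      rw [h3]
      have h4 : (Real.exp (1 / m))⁻¹ ≤ (1 / (m:ℝ) + 1)⁻¹ :=
        inv_anti₀ h2 h1
      refine h4.trans ?_
      rw [hkm]
      rw [one_sub_div (by positivity : (m:ℝ) + 1 ≠ 0)]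
      rw [inv_eq_one_div, div_le_div_iff₀ (by positivity) (by positivity)]
      field_simp
      ring_nf
      nlinarith [hmpos]
    have step2 : Real.exp (-1) ≤ ((1 : ℝ) - 1 / k) ^ m := by
      have : Real.exp (-1) = Real.exp (-(1 / (m : ℝ))) ^ m := by
        rw [← Real.exp_nat_mul]
        congr 1
        field_simp
      rw [this]
      exact pow_le_pow_left₀ (Real.exp_pos _).le hexp m
    exact step2.trans step1

/-- If `c 0, c 1, …, c d` are independent uniform colors from a palette of `k ≥ d + 1`
colors, then the probability that some `c j` with `j ≠ 0` coincides with `c 0` equals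
`1 - (1 - 1/k)^d`, which is at most `1 - 1/e`. -/
theorem prob_first_round_conflict
    {Ω : Type*} [MeasureSpace Ω] [IsProbabilityMeasure (ℙ : Measure Ω)]
    (k d : ℕ) (hk : 1 ≤ k) (hd : d ≤ k - 1)
    (c : Fin (d + 1) → Ω → Fin k)
    (hmeas : ∀ j, Measurable (c j))
    (hindep : iIndepFun c ℙ)
    (hunif : ∀ j, ∀ a : Fin k, ℙ {ω | c j ω = a} = (k : ℝ≥0∞)⁻¹) :
    (ℙ {ω | ∃ j : Fin (d + 1), j ≠ 0 ∧ c j ω = c 0 ω}).toReal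
        = 1 - ((1 : ℝ) - 1 / k) ^ d ∧
    (ℙ {ω | ∃ j : Fin (d + 1), j ≠ 0 ∧ c j ω = c 0 ω}).toReal
        ≤ 1 - 1 / Real.exp 1 := by
  classical
  have hkpos : (0 : ℝ≥0∞) < k := by exact_mod_cast hk
  have hkne : (k : ℝ≥0∞) ≠ 0 := hkpos.ne'
  have hktop : (k : ℝ≥0∞) ≠ ∞ := ENNReal.natCast_ne_top k
  -- the sets
  set s : Fin (d + 1) → Fin k → Set Ω :=
    fun j a => if j = 0 then c 0 ⁻¹' {a} else c j ⁻¹' {a}ᶜ with hs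
  have hsmeas : ∀ j a, MeasurableSet (s j a) := by
    intro j a
    simp only [hs]
    by_cases hj : j = 0
    · rw [if_pos hj]; exact (hmeas 0) (measurableSet_singleton a)
    · rw [if_neg hj]; exact (hmeas j) (measurableSet_singleton a).compl
  have hscomap : ∀ a, ∀ j, MeasurableSet[(inferInstance : MeasurableSpace (Fin k)).comap (c j)]
      (s j a) := by
    intro a j
    by_cases hj : j = 0
    · subst hj
      exact ⟨{a}, measurableSet_singleton a, by simp [hs]⟩
    · exact ⟨{a}ᶜ, (measurableSet_singleton a).compl, by simp [hs, hj]⟩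
  -- probability of each factor
  have hfac : ∀ j a, ℙ (s j a) = if j = 0 then (k : ℝ≥0∞)⁻¹ else 1 - (k : ℝ≥0∞)⁻¹ := by
    intro j a
    have hpre : ∀ j, c j ⁻¹' {a} = {ω | c j ω = a} := fun j => rfl
    by_cases hj : j = 0
    · simp only [hs, hj, if_true, hpre]
      exact hunif 0 a
    · simp only [hs, if_neg hj]
      rw [Set.preimage_compl, measure_compl ((hmeas j) (measurableSet_singleton a))
        (measure_ne_top _ _), measure_univ, hpre, hunif j a]
  -- probability of each intersection
  have hA : ∀ a, ℙ (⋂ j, s j a) = (k : ℝ≥0∞)⁻¹ * (1 - (k : ℝ≥0∞)⁻¹) ^ d := by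
    intro a
    rw [hindep.meas_iInter (hscomap a)]
    rw [Fin.prod_univ_succ]
    simp only [hfac, if_true, Fin.succ_ne_zero, if_false, Finset.prod_const, Finset.card_univ,
      Fintype.card_fin]
  -- union identity
  have hset : {ω | ∃ j : Fin (d + 1), j ≠ 0 ∧ c j ω = c 0 ω} = (⋃ a, ⋂ j, s j a)ᶜ := by
    ext ω
    simp only [Set.mem_setOf_eq, Set.mem_compl_iff, Set.mem_iUnion, Set.mem_iInter, not_exists,
      not_forall]
    constructor
    · rintro ⟨j, hj, hcj⟩ a
      by_cases ha : c 0 ω = a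
      · refine ⟨j, ?_⟩
        simp only [hs, if_neg hj, Set.mem_preimage, Set.mem_compl_iff, Set.mem_singleton_iff,
          not_not]
        exact hcj.trans ha
      · refine ⟨0, ?_⟩
        simp only [hs, if_pos rfl, Set.mem_preimage, Set.mem_singleton_iff]
        exact ha
    · intro h
      obtain ⟨j, hj⟩ := h (c 0 ω)
      by_cases hj0 : j = 0
      · exfalso; apply hj; simp [hs, hj0]
      · refine ⟨j, hj0, ?_⟩
        simp only [hs, if_neg hj0, Set.mem_preimage, Set.mem_compl_iff,
          Set.mem_singleton_iff, not_not] at hj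
        exact hj
  -- disjointness
  have hdisj : Pairwise (Function.onFun Disjoint fun a => ⋂ j, s j a) := by
    intro a b hab
    refine Set.disjoint_left.2 fun ω hωa hωb => hab ?_
    have h1 : c 0 ω = a := by
      have := Set.mem_iInter.1 hωa 0; simpa [hs] using this
    have h2 : c 0 ω = b := by
      have := Set.mem_iInter.1 hωb 0; simpa [hs] using this
    exact h1 ▸ h2
  have hAmeas : ∀ a : Fin k, MeasurableSet (⋂ j, s j a) :=
    fun a => MeasurableSet.iInter fun j => hsmeas j a
  -- probability of the union
  have hU : ℙ (⋃ a, ⋂ j, s j a) = (1 - (k : ℝ≥0∞)⁻¹) ^ d := by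
    rw [measure_iUnion hdisj hAmeas, tsum_fintype]
    simp only [hA, Finset.sum_const, Finset.card_univ, Fintype.card_fin, nsmul_eq_mul]
    rw [← mul_assoc, ENNReal.mul_inv_cancel hkne hktop, one_mul]
  -- probability of the event
  have hinvle : (k : ℝ≥0∞)⁻¹ ≤ 1 := ENNReal.inv_le_one.2 (by exact_mod_cast hk)
  have hqle : (1 - (k : ℝ≥0∞)⁻¹) ^ d ≤ 1 :=
    pow_le_one' (tsub_le_self.trans le_rfl) d
  have hE : ℙ {ω | ∃ j : Fin (d + 1), j ≠ 0 ∧ c j ω = c 0 ω}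
      = 1 - (1 - (k : ℝ≥0∞)⁻¹) ^ d := by
    rw [hset, measure_compl (MeasurableSet.iUnion hAmeas) (measure_ne_top _ _), measure_univ, hU]
  have htoReal : ((1 : ℝ≥0∞) - (k : ℝ≥0∞)⁻¹).toReal = 1 - 1 / (k : ℝ) := by
    rw [ENNReal.toReal_sub_of_le hinvle ENNReal.one_ne_top]
    simp [ENNReal.toReal_inv, one_div]
  have hmain : (ℙ {ω | ∃ j : Fin (d + 1), j ≠ 0 ∧ c j ω = c 0 ω}).toReal
      = 1 - ((1 : ℝ) - 1 / k) ^ d := by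
    rw [hE, ENNReal.toReal_sub_of_le hqle ENNReal.one_ne_top, ENNReal.toReal_one,
      ENNReal.toReal_pow, htoReal]
  refine ⟨hmain, ?_⟩
  rw [hmain]
  have := aux_exp_le k d hk hd
  rw [Real.exp_neg, inv_eq_one_div] at this
  linarith
end

section
/- Let k ≥ 1 be an integer, S a nonempty subset of Fin k, and U a finite index set. For each u ∈ U let A_u ⊆ Fin k with |A_u| ≥ 2, and let (c_u)_{u ∈ U} be independent random variables with c_u distributed uniformly on A_u. Let N = |{ i ∈ S : for all u ∈ U, c_u ≠ i }| be the number of colors in S chosen by no c_u. Then E[N] ≥ |S| · 4^{−|U|/|S|}; in particular, if |U| ≤ |S| then E[N] ≥ |S|/4. -/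
open MeasureTheory ProbabilityTheory
open scoped ENNReal

private noncomputable def fexp (x : ℝ) : ℝ := Real.exp (-(Real.log 4) * x)

private lemma log4 : Real.log 4 = 2 * Real.log 2 := by
  rw [show (4:ℝ) = 2^2 by norm_num, Real.log_pow]; push_cast; ring

private lemma fexp_convex : ConvexOn ℝ Set.univ fexp := by
  refine ⟨convex_univ, ?_⟩
  intro x _ y _ a b ha hb hab
  have key := convexOn_exp.2 (Set.mem_univ (-(Real.log 4) * x)) (Set.mem_univ (-(Real.log 4) * y)) ha hb hab
  simp only [fexp, smul_eq_mul]
  have harg : -Real.log 4 * (a * x + b * y) = a * (-Real.log 4 * x) + b * (-Real.log 4 * y) := by ring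
  rw [harg]
  simpa [smul_eq_mul] using key

private lemma fexp_le (x : ℝ) (h0 : 0 ≤ x) (h1 : x ≤ 1/2) : fexp x ≤ 1 - x := by
  have key := convexOn_exp.2 (Set.mem_univ (0:ℝ)) (Set.mem_univ (-Real.log 2))
    (show (0:ℝ) ≤ 1 - 2*x by linarith) (show (0:ℝ) ≤ 2*x by linarith)
    (show (1 - 2*x) + 2*x = 1 by ring)
  have he : Real.exp (-Real.log 2) = 1/2 := by
    rw [Real.exp_neg, Real.exp_log (by norm_num)]; norm_num
  have harg : (1 - 2*x) • (0:ℝ) + (2*x) • (-Real.log 2) = -(Real.log 4) * x := by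
    simp [smul_eq_mul, log4]; ring
  rw [harg] at key
  calc fexp x ≤ (1-2*x) * Real.exp 0 + (2*x) * Real.exp (-Real.log 2) := by
        simpa [fexp, smul_eq_mul] using key
    _ = 1 - x := by rw [he, Real.exp_zero]; ring

private lemma fexp_rpow (y : ℝ) : fexp y = (4:ℝ) ^ (-y) := by
  rw [Real.rpow_def_of_pos (by norm_num : (0:ℝ) < 4)]
  rw [fexp]; congr 1; ring

/-- Expectation estimate of Lemma 1: if each `c u` is uniform on a set `A u` of at
least two colors, independently, then the expected number of colors in `S` chosen by
no `c u` is at least `|S| * 4^(-|U|/|S|)`; in particular, it is at least `|S|/4` when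
`|U| ≤ |S|`. -/
theorem expected_unchosen_colors
    {Ω : Type*} [MeasureSpace Ω] [IsProbabilityMeasure (ℙ : Measure Ω)]
    (k : ℕ) (hk : 1 ≤ k) (S : Finset (Fin k)) (hS : S.Nonempty)
    (U : Type*) [Fintype U]
    (A : U → Finset (Fin k)) (hA : ∀ u, 2 ≤ (A u).card)
    (c : U → Ω → Fin k) (hmeas : ∀ u, Measurable (c u))
    (hindep : iIndepFun c ℙ)
    (hunif : ∀ u, ∀ a : Fin k,
      ℙ {ω | c u ω = a} = if a ∈ A u then ((A u).card : ℝ≥0∞)⁻¹ else 0) :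
    (S.card : ℝ) * (4 : ℝ) ^ (-(Fintype.card U : ℝ) / S.card)
        ≤ (∫ ω, (((S.filter (fun i => ∀ u : U, c u ω ≠ i)).card : ℝ)) ∂ℙ) ∧
    (Fintype.card U ≤ S.card →
      (S.card : ℝ) / 4
        ≤ ∫ ω, (((S.filter (fun i => ∀ u : U, c u ω ≠ i)).card : ℝ)) ∂ℙ) := by
  classical
  set n : ℝ := (S.card : ℝ) with hn
  have hnpos : 0 < n := by rw [hn]; exact_mod_cast Finset.card_pos.2 hS
  -- basic probabilities
  set p : U → Fin k → ℝ := fun u i => if i ∈ A u then ((A u).card : ℝ)⁻¹ else 0 with hp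
  have hp0 : ∀ u i, 0 ≤ p u i := by
    intro u i; simp only [hp]; split <;> positivity
  have hphalf : ∀ u i, p u i ≤ 1/2 := by
    intro u i; simp only [hp]; split
    · rw [inv_le_comm₀ (by exact_mod_cast lt_of_lt_of_le two_pos (hA u)) (by norm_num)]
      norm_num; exact_mod_cast hA u
    · norm_num
  -- the events
  set E : Fin k → Set Ω := fun i => ⋂ u, {ω | c u ω ≠ i} with hE
  have hcm : ∀ u (i : Fin k), MeasurableSet {ω | c u ω ≠ i} := by
    intro u i
    exact (hmeas u (measurableSet_singleton i)).compl
  have hEmeas : ∀ i, MeasurableSet (E i) := fun i => MeasurableSet.iInter fun u => hcm u i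
  -- single-event probability
  have hfac : ∀ u (i : Fin k), (ℙ {ω | c u ω ≠ i}).toReal = 1 - p u i := by
    intro u i
    have hcompl : {ω | c u ω ≠ i} = (c u ⁻¹' {i})ᶜ := rfl
    rw [hcompl, prob_compl_eq_one_sub (hmeas u (measurableSet_singleton i)),
      show (c u ⁻¹' {i}) = {ω | c u ω = i} from rfl, hunif u i]
    split
    · rw [ENNReal.toReal_sub_of_le (by
        simp only [ENNReal.inv_le_one]
        exact_mod_cast le_trans (by norm_num : (1:ℕ) ≤ 2) (hA u)) ENNReal.one_ne_top]
      simp [hp, ‹i ∈ A u›]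
    · simp [hp, ‹¬ i ∈ A u›]
  -- product formula
  have hprod : ∀ i : Fin k, (ℙ (E i)).toReal = ∏ u, (1 - p u i) := by
    intro i
    have hEeq : E i = ⋂ u, (c u) ⁻¹' ({i}ᶜ : Set (Fin k)) := rfl
    rw [hEeq, hindep.meas_iInter (fun u => ⟨{i}ᶜ, (measurableSet_singleton i).compl, rfl⟩),
      ENNReal.toReal_prod]
    refine Finset.prod_congr rfl fun u _ => ?_
    rw [show (c u ⁻¹' ({i}ᶜ : Set (Fin k))) = {ω | c u ω ≠ i} from rfl]
    exact hfac u i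
  -- integral = sum of probabilities
  have hint : (∫ ω, (((S.filter (fun i => ∀ u : U, c u ω ≠ i)).card : ℝ)) ∂ℙ)
      = ∑ i ∈ S, (ℙ (E i)).toReal := by
    have heq : ∀ ω, (((S.filter (fun i => ∀ u : U, c u ω ≠ i)).card : ℝ))
        = ∑ i ∈ S, (E i).indicator (fun _ => (1:ℝ)) ω := by
      intro ω
      rw [Finset.card_filter]
      push_cast
      refine Finset.sum_congr rfl fun i _ => ?_
      simp [Set.indicator_apply, hE, Set.mem_iInter]
    simp_rw [heq]
    rw [integral_finset_sum _ (fun i _ => (integrable_const (1:ℝ)).indicator (hEmeas i))]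
    refine Finset.sum_congr rfl fun i _ => ?_
    rw [integral_indicator_const (1:ℝ) (hEmeas i), smul_eq_mul, mul_one, measureReal_def]
  -- the per-color lower bound
  set t : Fin k → ℝ := fun i => ∑ u, p u i with ht
  have hfle : ∀ i : Fin k, fexp (t i) ≤ (ℙ (E i)).toReal := by
    intro i
    rw [hprod i, ht]
    have : fexp (∑ u, p u i) = ∏ u, fexp (p u i) := by
      simp only [fexp, Finset.mul_sum, neg_mul, ← Real.exp_sum]
    rw [this]
    exact Finset.prod_le_prod (fun u _ => (Real.exp_pos _).le)
      (fun u _ => fexp_le _ (hp0 u i) (hphalf u i))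
  -- total sum bound : ∑_{i∈S} t i ≤ card U
  have hT : ∑ i ∈ S, t i ≤ (Fintype.card U : ℝ) := by
    simp only [ht]
    rw [Finset.sum_comm]
    have : ∀ u : U, ∑ i ∈ S, p u i ≤ 1 := by
      intro u
      have h1 : ∑ i ∈ S, p u i ≤ ∑ i : Fin k, p u i :=
        Finset.sum_le_sum_of_subset_of_nonneg (Finset.subset_univ S)
          (fun i _ _ => hp0 u i)
      have h2 : ∑ i : Fin k, p u i = 1 := by
        simp only [hp, Finset.sum_ite_mem, Finset.univ_inter, Finset.sum_const, nsmul_eq_mul]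
        have hc : (0:ℝ) < ((A u).card : ℝ) := by
          exact_mod_cast lt_of_lt_of_le two_pos (hA u)
        exact mul_inv_cancel₀ hc.ne'
      linarith
    calc ∑ u : U, ∑ i ∈ S, p u i ≤ ∑ u : U, (1:ℝ) := Finset.sum_le_sum fun u _ => this u
      _ = (Fintype.card U : ℝ) := by simp
  -- Jensen
  have hjensen : n * fexp ((∑ i ∈ S, t i) / n) ≤ ∑ i ∈ S, fexp (t i) := by
    have hw : ∑ _i ∈ S, (n⁻¹ : ℝ) = 1 := by
      rw [Finset.sum_const, nsmul_eq_mul]; field_simp; exact hn.symm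
    have key := fexp_convex.map_sum_le (t := S) (w := fun _ => n⁻¹) (p := t)
      (fun i _ => by positivity) hw (fun i _ => Set.mem_univ _)
    simp only [smul_eq_mul] at key
    rw [show (∑ i ∈ S, n⁻¹ * t i) = (∑ i ∈ S, t i) / n by
      rw [← Finset.mul_sum, inv_mul_eq_div]] at key
    have hmul := mul_le_mul_of_nonneg_left key hnpos.le
    rw [Finset.mul_sum] at hmul
    calc n * fexp ((∑ i ∈ S, t i) / n) ≤ ∑ i ∈ S, n * (n⁻¹ * fexp (t i)) := hmul
      _ = ∑ i ∈ S, fexp (t i) := Finset.sum_congr rfl fun i _ => by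
          rw [← mul_assoc, mul_inv_cancel₀ hnpos.ne', one_mul]
  -- monotonicity in the exponent
  have hmono : n * (4:ℝ) ^ (-(Fintype.card U : ℝ) / n) ≤ n * fexp ((∑ i ∈ S, t i) / n) := by
    have h1 : fexp ((Fintype.card U : ℝ) / n) ≤ fexp ((∑ i ∈ S, t i) / n) := by
      simp only [fexp]
      apply Real.exp_le_exp.2
      have hlog : 0 ≤ Real.log 4 := Real.log_nonneg (by norm_num)
      have : (∑ i ∈ S, t i) / n ≤ (Fintype.card U : ℝ) / n :=
        (div_le_div_iff_of_pos_right hnpos).2 hT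
      nlinarith [this]
    have h2 : fexp ((Fintype.card U : ℝ) / n) = (4:ℝ) ^ (-(Fintype.card U : ℝ) / n) := by
      rw [fexp_rpow]; congr 1; ring
    rw [← h2]
    exact mul_le_mul_of_nonneg_left h1 hnpos.le
  have main : n * (4:ℝ) ^ (-(Fintype.card U : ℝ) / n)
      ≤ (∫ ω, (((S.filter (fun i => ∀ u : U, c u ω ≠ i)).card : ℝ)) ∂ℙ) := by
    rw [hint]
    calc n * (4:ℝ) ^ (-(Fintype.card U : ℝ) / n)
        ≤ n * fexp ((∑ i ∈ S, t i) / n) := hmono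
      _ ≤ ∑ i ∈ S, fexp (t i) := hjensen
      _ ≤ ∑ i ∈ S, (ℙ (E i)).toReal := Finset.sum_le_sum fun i _ => hfle i
  refine ⟨main, fun hle => ?_⟩
  have h14 : (1:ℝ)/4 ≤ (4:ℝ) ^ (-(Fintype.card U : ℝ) / n) := by
    have hexp : (-1:ℝ) ≤ -(Fintype.card U : ℝ) / n := by
      rw [neg_div, neg_le_neg_iff, div_le_one hnpos, hn]
      exact_mod_cast hle
    calc (1:ℝ)/4 = (4:ℝ) ^ (-1:ℝ) := by
          rw [Real.rpow_neg_one]; norm_num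
      _ ≤ (4:ℝ) ^ (-(Fintype.card U : ℝ) / n) :=
          Real.rpow_le_rpow_of_exponent_le (by norm_num) hexp
  calc n / 4 = n * (1/4) := by ring
    _ ≤ n * (4:ℝ) ^ (-(Fintype.card U : ℝ) / n) :=
        mul_le_mul_of_nonneg_left h14 hnpos.le
    _ ≤ _ := main
end

section
/- Let k ≥ 1 be an integer, S a nonempty subset of Fin k, and U a finite index set with |U| ≤ |S|. For each u ∈ U let A_u ⊆ Fin k with |A_u| ≥ 2, and let (c_u)_{u ∈ U} be independent random variables with c_u distributed uniformly on A_u. Let N = |{ i ∈ S : for all u ∈ U, c_u ≠ i }|. Then P(N ≥ |S|/5) ≥ 1/16. -/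
open MeasureTheory ProbabilityTheory
open scoped ENNReal

lemma exp_neg_log4_le (p : ℝ) (h0 : 0 ≤ p) (h2 : p ≤ 1/2) :
    Real.exp (-(Real.log 4) * p) ≤ 1 - p := by
  have h4 : Real.log 4 = 2 * Real.log 2 := by
    rw [show (4:ℝ) = 2^2 by norm_num, Real.log_pow]; push_cast; ring
  have hx : Real.exp (-(Real.log 2)) = 1/2 := by
    rw [Real.exp_neg, Real.exp_log two_pos]; norm_num
  have hconv := convexOn_exp.2 (Set.mem_univ (0:ℝ)) (Set.mem_univ (-(Real.log 2)))
    (show (0:ℝ) ≤ 1 - 2*p by linarith) (show (0:ℝ) ≤ 2*p by linarith) (by ring)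
  simp only [smul_eq_mul, mul_zero, zero_add, Real.exp_zero, hx] at hconv
  calc Real.exp (-(Real.log 4) * p) = Real.exp (2*p * -(Real.log 2)) := by
        rw [h4]; ring_nf
    _ ≤ (1-2*p)*1 + 2*p*(1/2) := hconv
    _ = 1 - p := by ring

/-- Lemma 1 of the paper: if `|U| ≤ |S|` and each `c u` is uniform on a set `A u` of
at least two colors, independently, then with probability at least `1/16` the number
of colors of `S` chosen by no `c u` is at least `|S|/5`. -/
theorem prob_many_unchosen_colors
    {Ω : Type*} [MeasureSpace Ω] [IsProbabilityMeasure (ℙ : Measure Ω)]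
    (k : ℕ) (hk : 1 ≤ k) (S : Finset (Fin k)) (hS : S.Nonempty)
    (U : Type*) [Fintype U] (hU : Fintype.card U ≤ S.card)
    (A : U → Finset (Fin k)) (hA : ∀ u, 2 ≤ (A u).card)
    (c : U → Ω → Fin k) (hmeas : ∀ u, Measurable (c u))
    (hindep : iIndepFun c ℙ)
    (hunif : ∀ u, ∀ a : Fin k,
      ℙ {ω | c u ω = a} = if a ∈ A u then ((A u).card : ℝ≥0∞)⁻¹ else 0) :
    1 / 16 ≤
      (ℙ {ω | (S.card : ℝ) / 5
        ≤ ((S.filter (fun i => ∀ u : U, c u ω ≠ i)).card : ℝ)}).toReal := by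
  classical
  have hm : 0 < S.card := hS.card_pos
  have hmR : (1:ℝ) ≤ S.card := by exact_mod_cast hm
  set E : Fin k → Set Ω := fun i => ⋂ u, (c u) ⁻¹' {i}ᶜ with hEdef
  have hEmeas : ∀ i, MeasurableSet (E i) := fun i =>
    MeasurableSet.iInter fun u => (hmeas u) (measurableSet_singleton i).compl
  set q : U → Fin k → ℝ := fun u i => if i ∈ A u then ((A u).card : ℝ)⁻¹ else 0 with hqdef
  have hcardA : ∀ u, (0:ℝ) < (A u).card := fun u => by
    have := hA u; exact_mod_cast Nat.lt_of_lt_of_le Nat.zero_lt_two this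
  have hq0 : ∀ u i, 0 ≤ q u i := by
    intro u i; simp only [hqdef]; split_ifs with h
    · exact inv_nonneg.2 (hcardA u).le
    · exact le_refl 0
  have hq2 : ∀ u i, q u i ≤ 1/2 := by
    intro u i; simp only [hqdef]; split_ifs with h
    · have h2 : (2:ℝ) ≤ (A u).card := by exact_mod_cast hA u
      calc ((A u).card : ℝ)⁻¹ ≤ (2:ℝ)⁻¹ := inv_anti₀ two_pos h2
        _ = 1/2 := by norm_num
    · linarith
  -- probability of a single player avoiding color i
  have hPc : ∀ u i, (ℙ ((c u) ⁻¹' {i}ᶜ)).toReal = 1 - q u i := by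
    intro u i
    have hset : (c u) ⁻¹' {i} = {ω | c u ω = i} := by ext ω; simp
    have hle : ℙ ((c u) ⁻¹' {i}) ≤ 1 := prob_le_one
    rw [Set.preimage_compl, prob_compl_eq_one_sub ((hmeas u) (measurableSet_singleton i)),
      ENNReal.toReal_sub_of_le hle ENNReal.one_ne_top, ENNReal.toReal_one, hset, hunif u i]
    simp only [hqdef]
    split_ifs with h
    · simp [ENNReal.toReal_inv]
    · simp
  have hPprod : ∀ i, (ℙ (E i)).toReal = ∏ u, (1 - q u i) := by
    intro i
    have hind := hindep.meas_iInter (s := fun u => (c u) ⁻¹' {i}ᶜ)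
      (fun u => ⟨{i}ᶜ, (measurableSet_singleton i).compl, rfl⟩)
    rw [hEdef, hind, ENNReal.toReal_prod]
    exact Finset.prod_congr rfl fun u _ => hPc u i
  -- sums of q
  have hqSsum : ∀ u, ∑ i ∈ S, q u i ≤ 1 := by
    intro u
    have heq : ∑ i ∈ S, q u i = ∑ i ∈ S.filter (· ∈ A u), ((A u).card : ℝ)⁻¹ := by
      rw [Finset.sum_filter]
    rw [heq, Finset.sum_const, nsmul_eq_mul]
    have hsub : (S.filter (· ∈ A u)).card ≤ (A u).card :=
      Finset.card_le_card fun x hx => (Finset.mem_filter.1 hx).2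
    calc ((S.filter (· ∈ A u)).card : ℝ) * ((A u).card : ℝ)⁻¹
        ≤ ((A u).card : ℝ) * ((A u).card : ℝ)⁻¹ := by
          apply mul_le_mul_of_nonneg_right _ (inv_nonneg.2 (hcardA u).le)
          exact_mod_cast hsub
      _ = 1 := mul_inv_cancel₀ (hcardA u).ne'
  set t : Fin k → ℝ := fun i => ∑ u, q u i with htdef
  have ht0 : ∀ i, 0 ≤ t i := fun i => Finset.sum_nonneg fun u _ => hq0 u i
  have hT : ∑ i ∈ S, t i ≤ (S.card : ℝ) := by
    simp only [htdef]
    rw [Finset.sum_comm]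
    calc ∑ u, ∑ i ∈ S, q u i ≤ ∑ _u : U, (1:ℝ) :=
          Finset.sum_le_sum fun u _ => hqSsum u
      _ = Fintype.card U := by simp
      _ ≤ S.card := by exact_mod_cast hU
  set L := Real.log 4 with hLdef
  have hL0 : 0 ≤ L := Real.log_nonneg (by norm_num)
  have hexp4 : Real.exp (-L) = 1/4 := by
    rw [Real.exp_neg, Real.exp_log (by norm_num : (0:ℝ) < 4)]; norm_num
  have key1 : ∀ i, Real.exp (-L * t i) ≤ ∏ u, (1 - q u i) := by
    intro i
    have hprod : Real.exp (-L * t i) = ∏ u, Real.exp (-L * q u i) := by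
      rw [← Real.exp_sum]; congr 1; simp only [htdef]; rw [Finset.mul_sum]
    rw [hprod]
    exact Finset.prod_le_prod (fun u _ => (Real.exp_pos _).le)
      (fun u _ => exp_neg_log4_le _ (hq0 u i) (hq2 u i))
  have hjensen : (S.card : ℝ) * Real.exp (∑ i ∈ S, (S.card:ℝ)⁻¹ * (-L * t i))
      ≤ ∑ i ∈ S, Real.exp (-L * t i) := by
    have hw : ∑ _i ∈ S, (S.card:ℝ)⁻¹ = 1 := by
      rw [Finset.sum_const, nsmul_eq_mul, mul_inv_cancel₀ (by positivity)]
    have hj := convexOn_exp.map_sum_le (t := S) (w := fun _ => (S.card:ℝ)⁻¹)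
      (p := fun i => -L * t i) (fun _ _ => by positivity) hw (fun _ _ => Set.mem_univ _)
    simp only [smul_eq_mul] at hj
    have hj2 := mul_le_mul_of_nonneg_left hj (by positivity : (0:ℝ) ≤ S.card)
    calc (S.card : ℝ) * Real.exp (∑ i ∈ S, (S.card:ℝ)⁻¹ * (-L * t i))
        ≤ (S.card : ℝ) * ∑ i ∈ S, (S.card:ℝ)⁻¹ * Real.exp (-L * t i) := hj2
      _ = ∑ i ∈ S, Real.exp (-L * t i) := by
          rw [Finset.mul_sum, ← Finset.sum_congr rfl fun i _ => rfl]
          refine Finset.sum_congr rfl fun i _ => ?_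
          field_simp
  have hargs : -L ≤ ∑ i ∈ S, (S.card:ℝ)⁻¹ * (-L * t i) := by
    have heq : ∑ i ∈ S, (S.card:ℝ)⁻¹ * (-L * t i)
        = ((S.card:ℝ)⁻¹ * -L) * ∑ i ∈ S, t i := by
      rw [Finset.mul_sum]; exact Finset.sum_congr rfl fun i _ => by ring
    have hTm : (S.card:ℝ)⁻¹ * ∑ i ∈ S, t i ≤ 1 := by
      rw [inv_mul_le_iff₀ (by positivity), mul_one]; exact hT
    have hTnn : 0 ≤ ∑ i ∈ S, t i := Finset.sum_nonneg fun i _ => ht0 i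
    rw [heq]
    nlinarith [mul_nonneg (inv_nonneg.2 (by positivity : (0:ℝ) ≤ S.card)) hTnn]
  have hE_lb : (S.card:ℝ)/4 ≤ ∑ i ∈ S, (ℙ (E i)).toReal := by
    calc (S.card:ℝ)/4 = S.card * (1/4) := by ring
      _ ≤ (S.card:ℝ) * Real.exp (∑ i ∈ S, (S.card:ℝ)⁻¹ * (-L * t i)) := by
          rw [← hexp4]
          exact mul_le_mul_of_nonneg_left (Real.exp_le_exp.2 hargs) (by positivity)
      _ ≤ ∑ i ∈ S, Real.exp (-L * t i) := hjensen
      _ ≤ ∑ i ∈ S, ∏ u, (1 - q u i) := Finset.sum_le_sum fun i _ => key1 i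
      _ = ∑ i ∈ S, (ℙ (E i)).toReal := Finset.sum_congr rfl fun i _ => (hPprod i).symm
  -- the count N
  set N : Ω → ℕ := fun ω => (S.filter (fun i => ∀ u : U, c u ω ≠ i)).card with hNdef
  have hmemE : ∀ ω i, ω ∈ E i ↔ ∀ u, c u ω ≠ i := by
    intro ω i; simp [hEdef]
  have hNsum : ∀ ω, N ω = ∑ i ∈ S, if ω ∈ E i then 1 else 0 := by
    intro ω
    rw [Finset.sum_boole]
    simp only [hNdef]
    norm_cast
    exact congrArg Finset.card
      (Finset.filter_congr fun i _ => (hmemE ω i).symm)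
  have hNmeas : Measurable N := by
    have : N = fun ω => ∑ i ∈ S, if ω ∈ E i then 1 else 0 := funext hNsum
    rw [this]
    exact Finset.measurable_sum _ fun i _ =>
      Measurable.ite (hEmeas i) measurable_const measurable_const
  have hNle : ∀ ω, N ω ≤ S.card := fun ω => Finset.card_filter_le _ _
  set Ev : Set Ω := {ω | (S.card : ℝ)/5 ≤ (N ω : ℝ)} with hEvdef
  have hEvmeas : MeasurableSet Ev := by
    have : Ev = N ⁻¹' {n : ℕ | (S.card : ℝ)/5 ≤ (n:ℝ)} := rfl
    rw [this]; exact hNmeas (by trivial)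
  -- expectation identity
  have hsumP : ∑ i ∈ S, ℙ (E i) = ∫⁻ ω, (N ω : ℝ≥0∞) ∂ℙ := by
    have hfun : (fun ω => (N ω : ℝ≥0∞))
        = fun ω => ∑ i ∈ S, (E i).indicator (fun _ => 1) ω := by
      funext ω
      rw [hNsum ω]
      push_cast
      exact Finset.sum_congr rfl fun i _ => by simp [Set.indicator_apply]
    rw [hfun, lintegral_finset_sum _ fun i _ =>
      measurable_const.indicator (hEmeas i)]
    exact Finset.sum_congr rfl fun i _ => (lintegral_indicator_one (hEmeas i)).symm
  have hub : ∫⁻ ω, (N ω : ℝ≥0∞) ∂ℙ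
      ≤ (S.card : ℝ≥0∞) * ℙ Ev + ENNReal.ofReal ((S.card:ℝ)/5) * ℙ Evᶜ := by
    rw [← lintegral_add_compl _ hEvmeas]
    apply add_le_add
    · calc ∫⁻ ω in Ev, (N ω : ℝ≥0∞) ∂ℙ ≤ ∫⁻ _ω in Ev, (S.card : ℝ≥0∞) ∂ℙ :=
            setLIntegral_mono' hEvmeas fun ω _ => by exact_mod_cast hNle ω
        _ = (S.card : ℝ≥0∞) * ℙ Ev := by rw [setLIntegral_const]
    · calc ∫⁻ ω in Evᶜ, (N ω : ℝ≥0∞) ∂ℙ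
          ≤ ∫⁻ _ω in Evᶜ, ENNReal.ofReal ((S.card:ℝ)/5) ∂ℙ := by
            apply setLIntegral_mono' hEvmeas.compl
            intro ω hω
            have hlt : (N ω : ℝ) ≤ (S.card : ℝ)/5 := le_of_not_ge hω
            rw [← ENNReal.ofReal_natCast]
            exact ENNReal.ofReal_le_ofReal hlt
        _ = ENNReal.ofReal ((S.card:ℝ)/5) * ℙ Evᶜ := by rw [setLIntegral_const]
  -- pass to reals
  set pr := (ℙ Ev).toReal with hprdef
  have hpr1 : pr ≤ 1 := by
    rw [hprdef]
    exact ENNReal.toReal_le_of_le_ofReal one_pos.le (by simpa using prob_le_one)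
  have hlhs : (S.card:ℝ)/4 ≤ (∑ i ∈ S, ℙ (E i)).toReal := by
    rw [ENNReal.toReal_sum fun i _ => measure_ne_top _ _]
    exact hE_lb
  have hrhs : ((S.card : ℝ≥0∞) * ℙ Ev + ENNReal.ofReal ((S.card:ℝ)/5) * ℙ Evᶜ).toReal
      = (S.card:ℝ) * pr + ((S.card:ℝ)/5) * (1 - pr) := by
    have hc : ℙ Evᶜ = 1 - ℙ Ev := prob_compl_eq_one_sub hEvmeas
    rw [ENNReal.toReal_add (by finiteness) (by finiteness), ENNReal.toReal_mul,
      ENNReal.toReal_mul, ENNReal.toReal_natCast, ENNReal.toReal_ofReal (by positivity),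
      hc, ENNReal.toReal_sub_of_le prob_le_one ENNReal.one_ne_top, ENNReal.toReal_one]
  have hmain : (S.card:ℝ)/4 ≤ (S.card:ℝ) * pr + ((S.card:ℝ)/5) * (1 - pr) := by
    have h1 : (∑ i ∈ S, ℙ (E i)).toReal
        ≤ ((S.card : ℝ≥0∞) * ℙ Ev + ENNReal.ofReal ((S.card:ℝ)/5) * ℙ Evᶜ).toReal := by
      apply ENNReal.toReal_mono (by finiteness)
      rw [hsumP]; exact hub
    rw [hrhs] at h1
    linarith [hlhs]
  have hpr0 : 0 ≤ pr := ENNReal.toReal_nonneg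
  have hfinal : 1/16 ≤ pr := by nlinarith [hmR]
  exact hfinal
end

section
/- Let k ≥ 1 be an integer, A a nonempty subset of Fin k, and i₀ ∈ A. Let S and D be disjoint finite index sets, and for each u ∈ S ∪ D let A_u ⊆ Fin k with |A_u| ≥ 2. Assume that for every u ∈ D: i₀ ∉ A_u and A_u is not contained in A (i.e. there exists j ∈ A_u with j ∉ A). Then (1/|A|) · Σ_{i ∈ A} Π_{u ∈ S ∪ D with i ∈ A_u} (1 − 1/|A_u|) ≥ 4^{−|S|/|A|} · e^{−|D|/|A|}, where the exponents |S|/|A| and |D|/|A| are real numbers. -/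
open Real Finset

/-- `4^(-1/n) ≤ 1 - 1/n` for `n ≥ 2`, by convexity of `exp`. -/
private lemma four_rpow_le (n : ℕ) (hn : 2 ≤ n) :
    (4 : ℝ) ^ (-(1 / (n : ℝ))) ≤ 1 - 1 / (n : ℝ) := by
  have hn0 : (0 : ℝ) < n := by positivity
  set x : ℝ := 1 / (n : ℝ) with hx
  have hx0 : 0 < x := by positivity
  have hx2 : x ≤ 1 / 2 := by
    rw [hx, div_le_div_iff₀ hn0 (by norm_num)]
    have : (2 : ℝ) ≤ n := by exact_mod_cast hn
    linarith
  have hlog : Real.log 4 = 2 * Real.log 2 := by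
    rw [show (4 : ℝ) = 2 ^ 2 by norm_num, Real.log_pow]; push_cast; ring
  have h12 : Real.exp (-(Real.log 4) / 2) = 1 / 2 := by
    rw [hlog]
    rw [show -(2 * Real.log 2) / 2 = -Real.log 2 by ring, Real.exp_neg,
      Real.exp_log (by norm_num : (0:ℝ) < 2)]
    norm_num
  have hconv := convexOn_exp.2 (Set.mem_univ (0 : ℝ))
    (Set.mem_univ (-(Real.log 4) / 2)) (by linarith : (0:ℝ) ≤ 1 - 2 * x)
    (by positivity : (0:ℝ) ≤ 2 * x) (by ring)
  simp only [smul_eq_mul, mul_zero, zero_add, Real.exp_zero, mul_one, h12] at hconv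
  have heq : (2 * x) * (-(Real.log 4) / 2) = -x * Real.log 4 := by ring
  rw [heq] at hconv
  have : (4 : ℝ) ^ (-x) = Real.exp (-x * Real.log 4) := by
    rw [Real.rpow_def_of_pos (by norm_num : (0:ℝ) < 4)]; ring_nf
  rw [this]
  calc Real.exp (-x * Real.log 4) ≤ 1 - 2 * x + 2 * x * (1/2) := hconv
    _ = 1 - x := by ring

private lemma quarter_le (n : ℕ) (hn : 2 ≤ n) :
    (1 / 4 : ℝ) ≤ (1 - 1 / (n : ℝ)) ^ n := by
  have hn0 : (0 : ℝ) < n := by positivity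
  have h := four_rpow_le n hn
  have hb : (0 : ℝ) ≤ (4 : ℝ) ^ (-(1 / (n : ℝ))) := Real.rpow_nonneg (by norm_num) _
  have hpow : ((4 : ℝ) ^ (-(1 / (n : ℝ)))) ^ n ≤ (1 - 1 / (n : ℝ)) ^ n :=
    pow_le_pow_left₀ hb h n
  have : ((4 : ℝ) ^ (-(1 / (n : ℝ)))) ^ n = 1 / 4 := by
    rw [← Real.rpow_natCast ((4:ℝ) ^ (-(1 / (n : ℝ)))) n, ← Real.rpow_mul (by norm_num)]
    rw [show -(1 / (n : ℝ)) * n = -1 by field_simp]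
    rw [Real.rpow_neg_one]; norm_num
  linarith [hpow, this.symm ▸ hpow]

private lemma exp_neg_one_le (n : ℕ) (hn : 2 ≤ n) :
    Real.exp (-1) ≤ (1 - 1 / (n : ℝ)) ^ (n - 1) := by
  obtain ⟨m, rfl⟩ : ∃ m, n = m + 1 := ⟨n - 1, by omega⟩
  have hm : 1 ≤ m := by omega
  have hm0 : (0 : ℝ) < m := by exact_mod_cast hm
  have hn0 : (0 : ℝ) < (m : ℝ) + 1 := by positivity
  have hstep : Real.exp (-(1 / (m : ℝ))) ≤ 1 - 1 / ((m : ℝ) + 1) := by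
    have h1' : (1 : ℝ) + 1 / m ≤ Real.exp (1 / m) := by
      have := Real.add_one_le_exp (1 / (m:ℝ)); linarith
    rw [Real.exp_neg]
    rw [inv_le_comm₀ (Real.exp_pos _) (by rw [sub_pos, div_lt_one (by linarith)]; linarith : (0:ℝ) < 1 - 1/((m:ℝ)+1))]
    calc (1 - 1 / ((m:ℝ) + 1))⁻¹ = 1 + 1 / m := by field_simp; rw [add_sub_cancel_right, div_self hm0.ne']
      _ ≤ Real.exp (1 / m) := h1'
  have hexp : Real.exp (-1) = (Real.exp (-(1 / (m : ℝ)))) ^ m := by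
    rw [← Real.exp_nat_mul]
    congr 1
    field_simp
  rw [show m + 1 - 1 = m from rfl, hexp]
  push_cast
  exact pow_le_pow_left₀ (Real.exp_nonneg _) hstep m

/-- The averaging inequality at the core of Lemma 2: with `A` the available colors of
a player, `i₀ ∈ A` her current color, and `A u` the available colors of her unhappy
neighbors `u ∈ S ∪ D` (where each `u ∈ D` satisfies `i₀ ∉ A u` and `A u ⊄ A`), the
average over `i ∈ A` of `∏_{u ∈ S ∪ D, i ∈ A u} (1 - 1/|A u|)` is at least
`4^(-|S|/|A|) * e^(-|D|/|A|)`. -/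
theorem average_escape_probability
    (k : ℕ) (hk : 1 ≤ k) (A : Finset (Fin k)) (hA : A.Nonempty)
    (i₀ : Fin k) (hi₀ : i₀ ∈ A)
    (U : Type*) [DecidableEq U] (S D : Finset U) (hSD : Disjoint S D)
    (Au : U → Finset (Fin k)) (h2 : ∀ u ∈ S ∪ D, 2 ≤ (Au u).card)
    (hD : ∀ u ∈ D, i₀ ∉ Au u ∧ ∃ j ∈ Au u, j ∉ A) :
    (1 / (A.card : ℝ)) *
        ∑ i ∈ A, ∏ u ∈ (S ∪ D).filter (fun u => i ∈ Au u),
          ((1 : ℝ) - 1 / ((Au u).card : ℝ))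
      ≥ (4 : ℝ) ^ (-(S.card : ℝ) / A.card) *
          Real.exp (-(D.card : ℝ) / A.card) := by
  classical
  have hAc : (0 : ℝ) < A.card := by exact_mod_cast Finset.card_pos.2 hA
  set a : ℝ := (A.card : ℝ)
  set z : Fin k → ℝ := fun i => ∏ u ∈ (S ∪ D).filter (fun u => i ∈ Au u),
    ((1 : ℝ) - 1 / ((Au u).card : ℝ)) with hz
  -- each factor is in (0, 1]
  have hfac : ∀ u ∈ S ∪ D, (0 : ℝ) < 1 - 1 / ((Au u).card : ℝ) ∧
      (1 : ℝ) - 1 / ((Au u).card : ℝ) ≤ 1 := by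
    intro u hu
    have h2u : (2 : ℝ) ≤ ((Au u).card : ℝ) := by exact_mod_cast h2 u hu
    constructor
    · have : 1 / ((Au u).card : ℝ) ≤ 1 / 2 := by
        apply one_div_le_one_div_of_le <;> linarith
      linarith
    · have : (0:ℝ) ≤ 1 / ((Au u).card : ℝ) := by positivity
      linarith
  have hznn : ∀ i ∈ A, (0 : ℝ) ≤ z i := by
    intro i _
    exact Finset.prod_nonneg fun u hu =>
      (hfac u (Finset.mem_filter.1 hu).1).1.le
  -- AM-GM
  have hw1 : ∑ _i ∈ A, (1 / a) = 1 := by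
    rw [Finset.sum_const, nsmul_eq_mul]
    field_simp; rfl
  have amgm := Real.geom_mean_le_arith_mean_weighted A (fun _ => 1 / a) z
    (fun i _ => by positivity) hw1 hznn
  -- product of z over A, swapped
  have hswap : ∏ i ∈ A, z i = ∏ u ∈ S ∪ D,
      ((1 : ℝ) - 1 / ((Au u).card : ℝ)) ^ (A.filter (fun i => i ∈ Au u)).card := by
    simp only [hz, Finset.prod_filter]
    rw [Finset.prod_comm]
    refine Finset.prod_congr rfl fun u _ => ?_
    rw [← Finset.prod_filter, Finset.prod_const]
  -- lower bound the double product
  have hSbound : ∀ u ∈ S, (1 / 4 : ℝ) ≤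
      ((1 : ℝ) - 1 / ((Au u).card : ℝ)) ^ (A.filter (fun i => i ∈ Au u)).card := by
    intro u hu
    have hu' : u ∈ S ∪ D := Finset.mem_union_left _ hu
    have hcard : (A.filter (fun i => i ∈ Au u)).card ≤ (Au u).card :=
      Finset.card_le_card fun x hx => (Finset.mem_filter.1 hx).2
    calc (1/4 : ℝ) ≤ ((1 : ℝ) - 1 / ((Au u).card : ℝ)) ^ (Au u).card :=
          quarter_le _ (h2 u hu')
      _ ≤ _ := pow_le_pow_of_le_one (hfac u hu').1.le (hfac u hu').2 hcard
  have hDbound : ∀ u ∈ D, Real.exp (-1) ≤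
      ((1 : ℝ) - 1 / ((Au u).card : ℝ)) ^ (A.filter (fun i => i ∈ Au u)).card := by
    intro u hu
    have hu' : u ∈ S ∪ D := Finset.mem_union_right _ hu
    obtain ⟨-, j, hj, hjA⟩ := hD u hu
    have hcard : (A.filter (fun i => i ∈ Au u)).card ≤ (Au u).card - 1 := by
      have hsub : A.filter (fun i => i ∈ Au u) ⊆ (Au u).erase j := by
        intro x hx
        rcases Finset.mem_filter.1 hx with ⟨hxA, hxAu⟩
        exact Finset.mem_erase.2 ⟨fun h => hjA (h ▸ hxA), hxAu⟩
      calc (A.filter (fun i => i ∈ Au u)).card ≤ ((Au u).erase j).card :=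
            Finset.card_le_card hsub
        _ = (Au u).card - 1 := Finset.card_erase_of_mem hj
    calc Real.exp (-1) ≤ ((1 : ℝ) - 1 / ((Au u).card : ℝ)) ^ ((Au u).card - 1) :=
          exp_neg_one_le _ (h2 u hu')
      _ ≤ _ := pow_le_pow_of_le_one (hfac u hu').1.le (hfac u hu').2 hcard
  have hprod : (1 / 4 : ℝ) ^ S.card * Real.exp (-1) ^ D.card ≤ ∏ i ∈ A, z i := by
    rw [hswap, Finset.prod_union hSD]
    apply mul_le_mul
    · rw [← Finset.prod_const]
      exact Finset.prod_le_prod (fun _ _ => by norm_num) hSbound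
    · rw [← Finset.prod_const]
      exact Finset.prod_le_prod (fun _ _ => (Real.exp_nonneg _)) hDbound
    · positivity
    · exact Finset.prod_nonneg fun u hu =>
        pow_nonneg (hfac u (Finset.mem_union_left _ hu)).1.le _
  -- geometric mean side
  have hgeo : ∏ i ∈ A, z i ^ (1 / a) = (∏ i ∈ A, z i) ^ (1 / a) :=
    Real.finset_prod_rpow A z hznn _
  -- putting it together
  have hrpow : ((1 / 4 : ℝ) ^ S.card * Real.exp (-1) ^ D.card) ^ (1 / a)
      ≤ (∏ i ∈ A, z i) ^ (1 / a) :=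
    Real.rpow_le_rpow (by positivity) hprod (by positivity)
  have hlhs : ∑ i ∈ A, (1 / a) * z i = (1 / a) * ∑ i ∈ A, z i := by
    rw [Finset.mul_sum]
  have hfinal : ((1 / 4 : ℝ) ^ S.card * Real.exp (-1) ^ D.card) ^ (1 / a)
      = (4 : ℝ) ^ (-(S.card : ℝ) / a) * Real.exp (-(D.card : ℝ) / a) := by
    have h4 : (1 / 4 : ℝ) ^ S.card = (4 : ℝ) ^ (-(S.card : ℝ)) := by
      rw [Real.rpow_neg (by norm_num), Real.rpow_natCast, ← inv_pow, one_div]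
    have he : Real.exp (-1) ^ D.card = Real.exp (-(D.card : ℝ)) := by
      rw [← Real.exp_nat_mul]; ring_nf
    rw [h4, he, Real.mul_rpow (Real.rpow_nonneg (by norm_num) _) (Real.exp_nonneg _),
      ← Real.rpow_mul (by norm_num : (0:ℝ) ≤ 4),
      Real.rpow_def_of_pos (Real.exp_pos _), Real.log_exp]
    rw [show -(S.card : ℝ) * (1 / a) = -(S.card : ℝ) / a by ring,
      show -(D.card : ℝ) * (1 / a) = -(D.card : ℝ) / a by ring]
  calc (4 : ℝ) ^ (-(S.card : ℝ) / a) * Real.exp (-(D.card : ℝ) / a)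
      = ((1 / 4 : ℝ) ^ S.card * Real.exp (-1) ^ D.card) ^ (1 / a) := hfinal.symm
    _ ≤ (∏ i ∈ A, z i) ^ (1 / a) := hrpow
    _ = ∏ i ∈ A, z i ^ (1 / a) := hgeo.symm
    _ ≤ ∑ i ∈ A, (1 / a) * z i := amgm
    _ = (1 / a) * ∑ i ∈ A, z i := hlhs
end

section
/- Let k ≥ 1 be an integer, A a nonempty subset of Fin k, and i₀ ∈ A. Let S and D be disjoint finite index sets with |S| ≤ |A| and |D| ≤ 5|A|, and for each u ∈ S ∪ D let A_u ⊆ Fin k with |A_u| ≥ 2, such that for every u ∈ D: i₀ ∉ A_u and there exists j ∈ A_u with j ∉ A. Let I, (c_u)_{u ∈ S ∪ D} be independent random variables with I uniform on A and c_u uniform on A_u. Then P(for all u ∈ S ∪ D, c_u ≠ I) ≥ 1/(4e^5). -/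
open MeasureTheory ProbabilityTheory
open scoped ENNReal

section Aux

lemma aux1 {x : ℝ} (h0 : 0 ≤ x) (h1 : x ≤ 1/2) :
    Real.exp (-(2 * Real.log 2) * x) ≤ 1 - x := by
  have hc := convexOn_exp.2 (Set.mem_univ (0:ℝ)) (Set.mem_univ (-Real.log 2))
    (show (0:ℝ) ≤ 1 - 2*x by linarith) (show (0:ℝ) ≤ 2*x by linarith) (by ring)
  simp only [smul_eq_mul, mul_zero, Real.exp_zero] at hc
  have h2 : Real.exp (-Real.log 2) = 1/2 := by
    rw [Real.exp_neg, Real.exp_log] <;> norm_num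
  rw [h2] at hc
  calc Real.exp (-(2 * Real.log 2) * x) = Real.exp (0 + 2*x * (-Real.log 2)) := by
        ring_nf
      _ ≤ (1-2*x)*1 + 2*x*(1/2) := hc
      _ = 1 - x := by ring

lemma aux2 {m : ℕ} (hm : 2 ≤ m) :
    Real.exp (-((m:ℝ)-1)⁻¹) ≤ 1 - (m:ℝ)⁻¹ := by
  have hm2 : (2:ℝ) ≤ (m:ℝ) := by exact_mod_cast hm
  have h0 : (0:ℝ) < (m:ℝ) - 1 := by linarith
  have hmpos : (0:ℝ) < m := by linarith
  have key : (m:ℝ)/((m:ℝ)-1) ≤ Real.exp (((m:ℝ)-1)⁻¹) := by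
    have h := Real.add_one_le_exp (((m:ℝ)-1)⁻¹)
    have heq : (m:ℝ)/((m:ℝ)-1) = ((m:ℝ)-1)⁻¹ + 1 := by field_simp; ring
    linarith
  have hquot : (0:ℝ) < (m:ℝ)/((m:ℝ)-1) := by positivity
  have := inv_anti₀ hquot key
  rw [Real.exp_neg]
  have heq2 : ((m:ℝ)/((m:ℝ)-1))⁻¹ = 1 - (m:ℝ)⁻¹ := by field_simp
  linarith

lemma lemB {k : ℕ} (A : Finset (Fin k)) (hA : A.Nonempty)
    {U : Type*} [DecidableEq U] (S D : Finset U) (hSD : Disjoint S D)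
    (hS : S.card ≤ A.card) (hD : D.card ≤ 5 * A.card)
    (Au : U → Finset (Fin k)) (h2 : ∀ u ∈ S ∪ D, 2 ≤ (Au u).card)
    (hDau : ∀ u ∈ D, (A ∩ Au u).card + 1 ≤ (Au u).card) :
    1 / (4 * Real.exp 5) ≤
      ∑ i ∈ A, (A.card:ℝ)⁻¹ *
        ∏ u ∈ S ∪ D, (1 - if i ∈ Au u then ((Au u).card:ℝ)⁻¹ else 0) := by
  classical
  set a := A.card with ha
  have hapos : 0 < a := hA.card_pos
  have haR : (0:ℝ) < a := by exact_mod_cast hapos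
  set g : U → Fin k → ℝ :=
    fun u i => 1 - if i ∈ Au u then ((Au u).card:ℝ)⁻¹ else 0 with hg
  have hginv : ∀ u ∈ S ∪ D, ((Au u).card:ℝ)⁻¹ ≤ 1/2 := by
    intro u hu
    have hm : (2:ℝ) ≤ ((Au u).card:ℝ) := by exact_mod_cast h2 u hu
    have := inv_anti₀ (by norm_num : (0:ℝ) < 2) hm
    linarith
  have hg0 : ∀ u ∈ S ∪ D, ∀ i, 0 ≤ g u i := by
    intro u hu i
    have := hginv u hu
    by_cases h : i ∈ Au u <;> simp [hg, h] <;> linarith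
  -- AM-GM
  have amgm := Real.geom_mean_le_arith_mean_weighted A (fun _ => (a:ℝ)⁻¹)
    (fun i => ∏ u ∈ S ∪ D, g u i)
    (fun i _ => by positivity)
    (by rw [Finset.sum_const, nsmul_eq_mul]; field_simp; rfl)
    (fun i _ => Finset.prod_nonneg fun u hu => hg0 u hu i)
  refine le_trans ?_ amgm
  -- swap products
  have swap : ∏ i ∈ A, (∏ u ∈ S ∪ D, g u i) ^ ((a:ℝ)⁻¹)
      = ∏ u ∈ S ∪ D, ∏ i ∈ A, (g u i) ^ ((a:ℝ)⁻¹) := by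
    rw [Finset.prod_comm]
    exact Finset.prod_congr rfl fun i _ =>
      (Real.finset_prod_rpow _ _ (fun u hu => hg0 u hu i) _).symm
  rw [swap]
  -- per-u lower bound
  have claim : ∀ u ∈ S ∪ D,
      Real.exp (-(if u ∈ S then 2*Real.log 2 else 1) * (a:ℝ)⁻¹)
        ≤ ∏ i ∈ A, (g u i) ^ ((a:ℝ)⁻¹) := by
    intro u hu
    set m := (Au u).card with hm
    have hm2 : 2 ≤ m := h2 u hu
    have hmR : (2:ℝ) ≤ (m:ℝ) := by exact_mod_cast hm2
    have hmpos : (0:ℝ) < m := by linarith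
    have hinv : (m:ℝ)⁻¹ ≤ 1/2 := hginv u hu
    have hb0 : (0:ℝ) ≤ 1 - (m:ℝ)⁻¹ := by linarith
    set n := (A ∩ Au u).card with hn
    have hprod : ∏ i ∈ A, (g u i) ^ ((a:ℝ)⁻¹)
        = ((1 - (m:ℝ)⁻¹) ^ ((a:ℝ)⁻¹)) ^ n := by
      calc ∏ i ∈ A, (g u i) ^ ((a:ℝ)⁻¹)
          = ∏ i ∈ A, (if i ∈ Au u then (1 - (m:ℝ)⁻¹) ^ ((a:ℝ)⁻¹) else 1) :=
            Finset.prod_congr rfl (fun i _ => by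
              by_cases h : i ∈ Au u <;> simp [hg, h, Real.one_rpow] <;> rfl)
        _ = ((1 - (m:ℝ)⁻¹) ^ ((a:ℝ)⁻¹)) ^ n := by
            rw [Finset.prod_ite, Finset.prod_const, Finset.prod_const, one_pow,
              mul_one, Finset.filter_mem_eq_inter]
    rw [hprod]
    -- generic step
    have step : ∀ t : ℝ, 0 ≤ t → Real.exp (-t) ≤ 1 - (m:ℝ)⁻¹ →
        Real.exp (-(t * (n:ℝ)) * (a:ℝ)⁻¹) ≤ ((1 - (m:ℝ)⁻¹) ^ ((a:ℝ)⁻¹)) ^ n := by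
      intro t ht hle
      have h1 : Real.exp (-t * (a:ℝ)⁻¹) ≤ (1 - (m:ℝ)⁻¹) ^ ((a:ℝ)⁻¹) := by
        rw [Real.exp_mul]
        exact Real.rpow_le_rpow (Real.exp_pos _).le hle (by positivity)
      calc Real.exp (-(t * (n:ℝ)) * (a:ℝ)⁻¹)
          = (Real.exp (-t * (a:ℝ)⁻¹)) ^ n := by
            rw [← Real.exp_nat_mul]; ring_nf
        _ ≤ ((1 - (m:ℝ)⁻¹) ^ ((a:ℝ)⁻¹)) ^ n :=
            pow_le_pow_left₀ (Real.exp_pos _).le h1 n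
    rcases Finset.mem_union.mp hu with hus | hud
    · rw [if_pos hus]
      have hnm : n ≤ m := Finset.card_le_card Finset.inter_subset_right
      have hL : (0:ℝ) < Real.log 2 := Real.log_pos one_lt_two
      refine le_trans (Real.exp_le_exp.mpr ?_)
        (step ((2*Real.log 2) * (m:ℝ)⁻¹) (by positivity) ?_)
      · have hnmR : (n:ℝ) ≤ (m:ℝ) := by exact_mod_cast hnm
        have key : (n:ℝ) * (m:ℝ)⁻¹ ≤ 1 := by
          rw [mul_inv_le_iff₀ hmpos]; linarith
        have h4 : (0:ℝ) ≤ 2*Real.log 2 * (a:ℝ)⁻¹ := by positivity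
        nlinarith [mul_le_mul_of_nonneg_left key h4]
      · have := aux1 (show (0:ℝ) ≤ (m:ℝ)⁻¹ by positivity) hinv
        calc Real.exp (-(2*Real.log 2 * (m:ℝ)⁻¹))
            = Real.exp (-(2*Real.log 2) * (m:ℝ)⁻¹) := by ring_nf
          _ ≤ 1 - (m:ℝ)⁻¹ := this
    · rw [if_neg (Finset.disjoint_right.mp hSD hud)]
      have hm1 : (0:ℝ) < (m:ℝ) - 1 := by linarith
      have hnm : (n:ℝ) ≤ (m:ℝ) - 1 := by
        have := hDau u hud
        have : (n:ℝ) + 1 ≤ (m:ℝ) := by exact_mod_cast this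
        linarith
      refine le_trans (Real.exp_le_exp.mpr ?_)
        (step (((m:ℝ)-1)⁻¹) (by positivity) (aux2 hm2))
      have key : ((m:ℝ)-1)⁻¹ * (n:ℝ) ≤ 1 := by
        rw [inv_mul_le_iff₀ hm1]; linarith
      have h4 : (0:ℝ) ≤ ((a:ℝ))⁻¹ := by positivity
      nlinarith [mul_le_mul_of_nonneg_right key h4]
  -- combine
  have prodbound : ∏ u ∈ S ∪ D, Real.exp (-(if u ∈ S then 2*Real.log 2 else 1) * (a:ℝ)⁻¹)
      ≤ ∏ u ∈ S ∪ D, ∏ i ∈ A, (g u i) ^ ((a:ℝ)⁻¹) :=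
    Finset.prod_le_prod (fun u _ => (Real.exp_pos _).le) claim
  refine le_trans ?_ prodbound
  rw [← Real.exp_sum]
  have hsum : ∑ u ∈ S ∪ D, -(if u ∈ S then 2*Real.log 2 else 1) * (a:ℝ)⁻¹
      = -((2*Real.log 2 * S.card + D.card) * (a:ℝ)⁻¹) := by
    rw [Finset.sum_union hSD]
    rw [Finset.sum_congr rfl (fun u hu => by rw [if_pos hu]),
        Finset.sum_congr rfl (fun u (hu : u ∈ D) => by
          rw [if_neg (Finset.disjoint_right.mp hSD hu)])]
    rw [Finset.sum_const, Finset.sum_const]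
    push_cast
    ring
  rw [hsum]
  have hL : (0:ℝ) < Real.log 2 := Real.log_pos one_lt_two
  have hSR : (S.card:ℝ) ≤ (a:ℝ) := by exact_mod_cast hS
  have hDR : (D.card:ℝ) ≤ 5*(a:ℝ) := by exact_mod_cast hD
  have hbound : (2*Real.log 2 * S.card + D.card) * (a:ℝ)⁻¹ ≤ 2*Real.log 2 + 5 := by
    have h1 : (2*Real.log 2 * S.card + D.card) ≤ (2*Real.log 2 + 5) * (a:ℝ) := by
      nlinarith
    calc (2*Real.log 2 * S.card + D.card) * (a:ℝ)⁻¹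
        ≤ ((2*Real.log 2 + 5) * (a:ℝ)) * (a:ℝ)⁻¹ :=
          mul_le_mul_of_nonneg_right h1 (by positivity)
      _ = 2*Real.log 2 + 5 := by field_simp
  have hfin : (1:ℝ) / (4 * Real.exp 5) = Real.exp (-(2*Real.log 2 + 5)) := by
    rw [Real.exp_neg, Real.exp_add]
    have h4 : Real.exp (2*Real.log 2) = 4 := by
      rw [show (2:ℝ)*Real.log 2 = Real.log 4 by
        rw [show (4:ℝ) = 2^2 by norm_num, Real.log_pow]; push_cast; ring]
      exact Real.exp_log (by norm_num)
    rw [h4, one_div]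
  rw [hfin]
  exact Real.exp_le_exp.mpr (by linarith)

lemma partA_prob
    {Ω : Type*} [MeasureSpace Ω] [IsProbabilityMeasure (ℙ : Measure Ω)]
    (k : ℕ) (hk : 1 ≤ k) (A : Finset (Fin k)) (hA : A.Nonempty)
    (U : Type*) [DecidableEq U] (S D : Finset U)
    (Au : U → Finset (Fin k)) (h2 : ∀ u ∈ S ∪ D, 2 ≤ (Au u).card)
    (I : Ω → Fin k) (c : U → Ω → Fin k)
    (hmeasI : Measurable I) (hmeasc : ∀ u, Measurable (c u))
    (hindep : iIndepFun
      (fun o : Option U => o.elim I c) ℙ)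
    (hunifI : ∀ a : Fin k,
      ℙ {ω | I ω = a} = if a ∈ A then (A.card : ℝ≥0∞)⁻¹ else 0)
    (hunifc : ∀ u ∈ S ∪ D, ∀ a : Fin k,
      ℙ {ω | c u ω = a} = if a ∈ Au u then ((Au u).card : ℝ≥0∞)⁻¹ else 0) :
    (ℙ {ω | ∀ u ∈ S ∪ D, c u ω ≠ I ω}).toReal =
      ∑ i ∈ A, (A.card:ℝ)⁻¹ *
        ∏ u ∈ S ∪ D, (1 - if i ∈ Au u then ((Au u).card:ℝ)⁻¹ else 0) := by
  classical
  set T := S ∪ D with hT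
  set E : Fin k → Set Ω :=
    fun i => {ω | I ω = i} ∩ ⋂ u ∈ (T : Finset U), {ω | c u ω ≠ i} with hE
  have hmeasset : ∀ i, MeasurableSet (E i) := by
    intro i
    refine (hmeasI (measurableSet_singleton i)).inter ?_
    exact MeasurableSet.biInter (Finset.countable_toSet T)
      (fun u _ => (hmeasc u (measurableSet_singleton i)).compl)
  have hcover : {ω | ∀ u ∈ T, c u ω ≠ I ω} = ⋃ i, E i := by
    ext ω
    simp only [Set.mem_setOf_eq, Set.mem_iUnion, hE, Set.mem_inter_iff,
      Set.mem_iInter]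
    constructor
    · intro h; exact ⟨I ω, rfl, h⟩
    · rintro ⟨i, hi, h⟩ u hu; rw [hi]; exact h u hu
  have hdisj : Pairwise (Function.onFun Disjoint E) := by
    intro i j hij
    simp only [Function.onFun, Set.disjoint_left, hE]
    rintro ω ⟨h1, -⟩ ⟨h2', -⟩
    exact hij (h1.symm.trans h2')
  have hprob : ∀ i, ℙ (E i) =
      (if i ∈ A then (A.card:ℝ≥0∞)⁻¹ else 0) *
        ∏ u ∈ T, (1 - if i ∈ Au u then ((Au u).card:ℝ≥0∞)⁻¹ else 0) := by
    intro i
    set F : Option U → Set Ω :=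
      fun o => o.elim {ω | I ω = i} (fun u => {ω | c u ω ≠ i}) with hF
    have hEeq : E i = ⋂ o ∈ insert none (T.image some), F o := by
      ext ω
      simp only [hE, hF, Set.mem_inter_iff, Set.mem_setOf_eq, Set.mem_iInter,
        Finset.mem_insert, Finset.mem_image]
      constructor
      · rintro ⟨h1, h2'⟩ o ho
        rcases ho with rfl | ⟨u, hu, rfl⟩
        · exact h1
        · exact h2' u hu
      · intro h
        refine ⟨h none (Or.inl rfl), fun u hu => h (some u) (Or.inr ⟨u, hu, rfl⟩)⟩
    have hmeas' : ∀ o ∈ insert none (T.image some),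
        MeasurableSet[(inferInstance : MeasurableSpace (Fin k)).comap
          ((fun o : Option U => o.elim I c) o)] (F o) := by
      rintro (_ | u) _
      · exact ⟨{i}, measurableSet_singleton i, rfl⟩
      · exact ⟨{i}ᶜ, (measurableSet_singleton i).compl, rfl⟩
    have hindep' := hindep.meas_biInter hmeas'
    rw [hEeq, hindep', Finset.prod_insert (by simp),
      Finset.prod_image (fun x _ y _ h => Option.some.inj h)]
    have h1 : ℙ (F none) = if i ∈ A then (A.card:ℝ≥0∞)⁻¹ else 0 := hunifI i
    have h2' : ∀ u ∈ T, ℙ (F (some u)) =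
        1 - if i ∈ Au u then ((Au u).card:ℝ≥0∞)⁻¹ else 0 := by
      intro u hu
      have h3 : F (some u) = (c u ⁻¹' {i})ᶜ := rfl
      rw [h3, prob_compl_eq_one_sub (hmeasc u (measurableSet_singleton i)),
        show (c u ⁻¹' {i} : Set Ω) = {ω | c u ω = i} from rfl, hunifc u hu i]
    rw [h1, Finset.prod_congr rfl h2']
  have hsum : ℙ {ω | ∀ u ∈ T, c u ω ≠ I ω} =
      ∑ i ∈ A, (A.card:ℝ≥0∞)⁻¹ *
        ∏ u ∈ T, (1 - if i ∈ Au u then ((Au u).card:ℝ≥0∞)⁻¹ else 0) := by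
    rw [hcover, measure_iUnion hdisj hmeasset, tsum_fintype]
    rw [Finset.sum_congr rfl (fun i _ => hprob i)]
    rw [← Finset.sum_subset (Finset.subset_univ A) (fun i _ hi => by
      rw [if_neg hi, zero_mul])]
    exact Finset.sum_congr rfl (fun i hi => by rw [if_pos hi])
  rw [hsum, ENNReal.toReal_sum]
  · refine Finset.sum_congr rfl (fun i _ => ?_)
    rw [ENNReal.toReal_mul, ENNReal.toReal_inv, ENNReal.toReal_natCast,
      ENNReal.toReal_prod]
    refine congrArg _ (Finset.prod_congr rfl (fun u hu => ?_))
    by_cases h : i ∈ Au u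
    · rw [if_pos h, if_pos h, ENNReal.toReal_sub_of_le
        (by
          rw [ENNReal.inv_le_one]
          exact_mod_cast le_trans (by norm_num) (h2 u hu))
        ENNReal.one_ne_top,
        ENNReal.toReal_inv, ENNReal.toReal_natCast, ENNReal.toReal_one]
    · rw [if_neg h, if_neg h, tsub_zero, ENNReal.toReal_one, sub_zero]
  · intro i _
    refine ENNReal.mul_ne_top ?_ ?_
    · exact ENNReal.inv_ne_top.mpr (by
        simp [Finset.card_ne_zero_of_mem (hA.choose_spec)])
    · refine (lt_of_le_of_lt ?_ ENNReal.one_lt_top).ne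
      calc ∏ u ∈ T, (1 - if i ∈ Au u then ((Au u).card:ℝ≥0∞)⁻¹ else 0)
          ≤ ∏ u ∈ T, 1 := Finset.prod_le_prod' (fun u _ => tsub_le_self.trans_eq rfl)
        _ = 1 := Finset.prod_const_one

end Aux

/-- Probabilistic content of Lemma 2: with `I` uniform on `A ∋ i₀`, the `c u`
uniform on `A u` (`|A u| ≥ 2`), all independent, `|S| ≤ |A|`, `|D| ≤ 5|A|`, and each
`u ∈ D` satisfying `i₀ ∉ A u` and `A u ⊄ A`, the probability that no `c u`
(for `u ∈ S ∪ D`) equals `I` is at least `1/(4e^5)`. -/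
theorem prob_becomes_happy
    {Ω : Type*} [MeasureSpace Ω] [IsProbabilityMeasure (ℙ : Measure Ω)]
    (k : ℕ) (hk : 1 ≤ k) (A : Finset (Fin k)) (hA : A.Nonempty)
    (i₀ : Fin k) (hi₀ : i₀ ∈ A)
    (U : Type*) [DecidableEq U] (S D : Finset U) (hSD : Disjoint S D)
    (hS : S.card ≤ A.card) (hD : D.card ≤ 5 * A.card)
    (Au : U → Finset (Fin k)) (h2 : ∀ u ∈ S ∪ D, 2 ≤ (Au u).card)
    (hDau : ∀ u ∈ D, i₀ ∉ Au u ∧ ∃ j ∈ Au u, j ∉ A)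
    (I : Ω → Fin k) (c : U → Ω → Fin k)
    (hmeasI : Measurable I) (hmeasc : ∀ u, Measurable (c u))
    (hindep : iIndepFun
      (fun o : Option U => o.elim I c) ℙ)
    (hunifI : ∀ a : Fin k,
      ℙ {ω | I ω = a} = if a ∈ A then (A.card : ℝ≥0∞)⁻¹ else 0)
    (hunifc : ∀ u ∈ S ∪ D, ∀ a : Fin k,
      ℙ {ω | c u ω = a} = if a ∈ Au u then ((Au u).card : ℝ≥0∞)⁻¹ else 0) :
    1 / (4 * Real.exp 5) ≤
      (ℙ {ω | ∀ u ∈ S ∪ D, c u ω ≠ I ω}).toReal := by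
  rw [partA_prob k hk A hA U S D Au h2 I c hmeasI hmeasc hindep hunifI hunifc]
  refine lemB A hA S D hSD hS hD Au h2 ?_
  intro u hu
  obtain ⟨-, j, hj, hjA⟩ := hDau u hu
  have hss : A ∩ Au u ⊂ Au u :=
    (Finset.ssubset_iff_of_subset Finset.inter_subset_right).mpr
      ⟨j, hj, fun hmem => hjA (Finset.mem_inter.mp hmem).1⟩
  exact Finset.card_lt_card hss
end
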